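/- The optimal envy-free revenue in the continuous linear multi-unit market is at least the optimal envy-free revenue in the corresponding discrete market: for any envy-free pricing (x, p) of the discrete market with m indivisible units (x_i integers), there is an envy-free price p' and fractional allocation in the continuous market (same v_i, B_i, total supply m) achieving revenue at least p·Σ x_i. -/

import Mathlib

/-- Demand set of a buyer in the discrete market. -/
noncomputable def demandSet (v B : ℝ) (m : ℕ) (p : ℝ) : Set ℕ :=
  if p < v then {min ⌊B / p⌋₊ m}
  else if p = v then {d | d ≤ min ⌊B / p⌋₊ m}
  else {0}

/-- `(x, p)` is an envy-free pricing of the discrete market. -/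
noncomputable def EnvyFreePricing {n : ℕ} (v B : Fin n → ℝ) (m : ℕ)
    (x : Fin n → ℕ) (p : ℝ) : Prop :=
  (∑ i, x i) ≤ m ∧ ∀ i, x i ∈ demandSet (v i) (B i) m p

/-- Envy-free fractional outcome of the continuous market. -/
def ContEF {n : ℕ} (v B : Fin n → ℝ) (m : ℕ) (y : Fin n → ℝ) (p : ℝ) : Prop :=
  (∀ i, p < v i → y i = B i / p) ∧
  (∀ i, v i = p → 0 ≤ y i ∧ y i ≤ B i / p) ∧
  (∀ i, v i < p → y i = 0) ∧
  (∑ i, y i) ≤ (m : ℝ)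

set_option maxHeartbeats 1000000 in
/-- The optimal envy-free revenue of the continuous market is at least that of
the discrete market: any discrete envy-free pricing's revenue is matched or
beaten by some continuous envy-free outcome. -/
theorem continuous_revenue_ge_discrete {n : ℕ} (v B : Fin n → ℝ) (m : ℕ)
    (hv : ∀ i, 0 < v i) (hB : ∀ i, 0 < B i)
    (x : Fin n → ℕ) (p : ℝ) (hp : 0 < p)
    (hEF : EnvyFreePricing v B m x p) :
    ∃ (p' : ℝ) (y : Fin n → ℝ), 0 < p' ∧ ContEF v B m y p' ∧
      p' * (∑ i, y i) ≥ p * (∑ i, (x i : ℝ)) := by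
  obtain ⟨hxm, hx⟩ := hEF
  -- basic facts about the discrete allocation
  have hx0 : ∀ i, v i < p → x i = 0 := by
    intro i hi
    have hxi := hx i
    unfold demandSet at hxi
    rw [if_neg (not_lt.mpr hi.le), if_neg (ne_of_gt hi)] at hxi
    simpa using hxi
  have hxmin : ∀ i, p ≤ v i → x i ≤ min ⌊B i / p⌋₊ m := by
    intro i hi
    have hxi := hx i
    unfold demandSet at hxi
    rcases eq_or_lt_of_le hi with h | h
    · rw [if_neg (not_lt.mpr h.ge), if_pos h] at hxi
      exact hxi
    · rw [if_pos h] at hxi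
      exact le_of_eq hxi
  have hxle : ∀ i, p ≤ v i → (x i : ℝ) ≤ B i / p := by
    intro i hi
    have h1 : x i ≤ ⌊B i / p⌋₊ := (hxmin i hi).trans (min_le_left _ _)
    calc (x i : ℝ) ≤ (⌊B i / p⌋₊ : ℝ) := by exact_mod_cast h1
      _ ≤ B i / p := Nat.floor_le (div_nonneg (hB i).le hp.le)
  -- case m = 0
  rcases Nat.eq_zero_or_pos m with hm0 | hm
  · subst hm0
    have hvsum : 0 ≤ ∑ i, v i := Finset.sum_nonneg fun i _ => (hv i).le
    refine ⟨p + ∑ i, v i, fun _ => 0, by linarith, ⟨?_, ?_, ?_, ?_⟩, ?_⟩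
    · intro i hi
      have : v i ≤ ∑ j, v j :=
        Finset.single_le_sum (fun j _ => (hv j).le) (Finset.mem_univ i)
      linarith
    · intro i _
      refine ⟨le_refl 0, div_nonneg (hB i).le (by linarith)⟩
    · intro i _; rfl
    · simp
    · have hxz : ∀ i, x i = 0 := by
        intro i
        have := hxm
        have h1 : x i ≤ ∑ j, x j := Finset.single_le_sum (fun j _ => Nat.zero_le _)
          (Finset.mem_univ i)
        omega
      simp [hxz]
  -- m ≥ 1 from now on
  have hmR : (0 : ℝ) < m := by exact_mod_cast hm
  by_cases hA : (∑ i ∈ Finset.univ.filter (fun i => p ≤ v i), B i) ≤ p * m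
  · -- Case A : take p' = p, give everyone with v i ≥ p their full demand
    set y : Fin n → ℝ := fun i => if p ≤ v i then B i / p else 0 with hy
    have hsumy : ∑ i, y i = (∑ i ∈ Finset.univ.filter (fun i => p ≤ v i), B i) / p := by
      rw [Finset.sum_div, ← Finset.sum_filter]
    refine ⟨p, y, hp, ⟨?_, ?_, ?_, ?_⟩, ?_⟩
    · intro i hi; simp [hy, hi.le]
    · intro i hi
      have : p ≤ v i := hi.ge
      simp only [hy, if_pos this]
      exact ⟨div_nonneg (hB i).le hp.le, le_refl _⟩
    · intro i hi; simp [hy, not_le.mpr hi]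
    · rw [hsumy]
      rw [div_le_iff₀ hp] at *
      linarith [hA]
    · have hxy : ∀ i, (x i : ℝ) ≤ y i := by
        intro i
        by_cases hi : p ≤ v i
        · simp only [hy, if_pos hi]; exact hxle i hi
        · simp [hy, hi, hx0 i (not_le.mp hi)]
      have := Finset.sum_le_sum (fun i (_ : i ∈ Finset.univ) => hxy i)
      exact mul_le_mul_of_nonneg_left this hp.le
  · -- Case B : water-filling price
    push_neg at hA
    set h : ℝ → ℝ := fun q => ∑ i ∈ Finset.univ.filter (fun i => q ≤ v i), B i with hh
    set C : Finset ℝ := insert p (Finset.univ.image v) with hC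
    set T : Finset ℝ := C.filter (fun t => t * m ≤ h t) with hT
    have hpT : p ∈ T := by
      rw [hT, Finset.mem_filter]
      exact ⟨Finset.mem_insert_self _ _, le_of_lt hA⟩
    have hTne : T.Nonempty := ⟨p, hpT⟩
    set t0 : ℝ := T.max' hTne with ht0
    have hpt0 : p ≤ t0 := Finset.le_max' T p hpT
    have ht0T : t0 ∈ T := T.max'_mem hTne
    have ht0cond : t0 * m ≤ h t0 := (Finset.mem_filter.mp ht0T).2
    set Hp : ℝ := ∑ i ∈ Finset.univ.filter (fun i => t0 < v i), B i with hHp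
    set p' : ℝ := max t0 (Hp / m) with hp'
    have ht0p' : t0 ≤ p' := le_max_left _ _
    have hpp' : p ≤ p' := hpt0.trans ht0p'
    have hp'pos : 0 < p' := lt_of_lt_of_le hp hpp'
    -- The two key inequalities at p'
    have hB0 : ∀ (s : Finset (Fin n)), 0 ≤ ∑ i ∈ s, B i :=
      fun s => Finset.sum_nonneg fun i _ => (hB i).le
    have key : p' * m ≤ h p' ∧
        (∑ i ∈ Finset.univ.filter (fun i => p' < v i), B i) ≤ p' * m := by
      by_cases hc : Hp / m ≤ t0
      · have hp't0 : p' = t0 := max_eq_left hc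
        constructor
        · rw [hp't0]; exact ht0cond
        · rw [hp't0]
          have : Hp ≤ t0 * m := by
            rw [div_le_iff₀ hmR] at hc; linarith
          simpa [hHp] using this
      · push_neg at hc
        have hp'eq : p' = Hp / m := max_eq_right hc.le
        have hp'm : p' * m = Hp := by
          rw [hp'eq, div_mul_cancel₀ _ (ne_of_gt hmR)]
        have ht0p'lt : t0 < p' := by rw [hp'eq]; exact hc
        -- the set of buyers with value above t0 is nonempty
        have hGne : (Finset.univ.filter (fun i => t0 < v i)).Nonempty := by
          by_contra hcon
          rw [Finset.not_nonempty_iff_eq_empty] at hcon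
          have : Hp = 0 := by rw [hHp, hcon, Finset.sum_empty]
          have : (0:ℝ) < Hp / m := lt_trans (lt_of_lt_of_le hp hpt0) hc
          rw [‹Hp = 0›] at this
          simp at this
        obtain ⟨i0, hi0G, hi0min⟩ :=
          Finset.exists_min_image (Finset.univ.filter (fun i => t0 < v i)) v hGne
      -- u := v i0 is the least value above t0
        have hi0gt : t0 < v i0 := (Finset.mem_filter.mp hi0G).2
        have huC : v i0 ∈ C := Finset.mem_insert_of_mem
          (Finset.mem_image_of_mem v (Finset.mem_univ i0))
        have huT : v i0 ∉ T := fun hmem =>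
          absurd (Finset.le_max' T _ hmem) (not_le.mpr hi0gt)
        have hucond : h (v i0) < v i0 * m := by
          by_contra hcond
          push_neg at hcond
          exact huT (Finset.mem_filter.mpr ⟨huC, hcond⟩)
        have hfeq : Finset.univ.filter (fun i => v i0 ≤ v i)
            = Finset.univ.filter (fun i => t0 < v i) := by
          ext i
          simp only [Finset.mem_filter, Finset.mem_univ, true_and]
          constructor
          · intro hi; exact lt_of_lt_of_le hi0gt hi
          · intro hi; exact hi0min i (Finset.mem_filter.mpr ⟨Finset.mem_univ i, hi⟩)
        have hHu : h (v i0) = Hp := by rw [hh]; simp only; rw [hfeq]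
        have hp'u : p' < v i0 := by
          rw [hp'eq, div_lt_iff₀ hmR]
          rw [hHu] at hucond
          exact hucond
        have hfeq2 : Finset.univ.filter (fun i => p' ≤ v i)
            = Finset.univ.filter (fun i => t0 < v i) := by
          ext i
          simp only [Finset.mem_filter, Finset.mem_univ, true_and]
          constructor
          · intro hi; exact lt_of_lt_of_le ht0p'lt hi
          · intro hi
            exact le_trans hp'u.le
              (hi0min i (Finset.mem_filter.mpr ⟨Finset.mem_univ i, hi⟩))
        have hhp' : h p' = p' * m := by
          rw [hh]; simp only; rw [hfeq2, ← hHp, hp'm]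
        constructor
        · exact le_of_eq hhp'.symm
        · calc (∑ i ∈ Finset.univ.filter (fun i => p' < v i), B i)
              ≤ ∑ i ∈ Finset.univ.filter (fun i => p' ≤ v i), B i := by
                apply Finset.sum_le_sum_of_subset_of_nonneg
                · intro i hi
                  simp only [Finset.mem_filter, Finset.mem_univ, true_and] at hi ⊢
                  exact hi.le
                · intro i _ _; exact (hB i).le
            _ = p' * m := hhp'
    obtain ⟨hK1, hK2⟩ := key
    -- build the fractional allocation at price p'
    set Sgt : ℝ := ∑ i ∈ Finset.univ.filter (fun i => p' < v i), B i with hSgt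
    set Seq : ℝ := ∑ i ∈ Finset.univ.filter (fun i => v i = p'), B i with hSeq
    have hsplit : h p' = Sgt + Seq := by
      rw [hh, hSgt, hSeq]
      simp only
      rw [← Finset.sum_filter_add_sum_filter_not
        (Finset.univ.filter (fun i => p' ≤ v i)) (fun i => p' < v i) B]
      congr 1
      · congr 1
        ext i
        simp only [Finset.mem_filter, Finset.mem_univ, true_and]
        constructor
        · rintro ⟨_, h2⟩; exact h2
        · intro h2; exact ⟨h2.le, h2⟩
      · congr 1
        ext i
        simp only [Finset.mem_filter, Finset.mem_univ, true_and]
        constructor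
        · rintro ⟨h1, h2⟩; exact le_antisymm (not_lt.mp h2) h1
        · intro h1; exact ⟨h1.ge, not_lt.mpr h1.le⟩
    have hSeq0 : 0 ≤ Seq := hB0 _
    have hSgt0 : 0 ≤ Sgt := hB0 _
    set r : ℝ := (m : ℝ) - Sgt / p' with hr
    have hr0 : 0 ≤ r := by
      rw [hr, sub_nonneg, div_le_iff₀ hp'pos]
      linarith [hK2]
    have hrS : r * p' ≤ Seq := by
      have h1 : p' * m ≤ Sgt + Seq := by rw [← hsplit]; exact hK1
      have h2 : r * p' = (m : ℝ) * p' - Sgt := by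
        rw [hr, sub_mul, div_mul_cancel₀ _ (ne_of_gt hp'pos)]
      rw [h2]
      nlinarith [h1]
    set lam : ℝ := if Seq = 0 then 0 else r * p' / Seq with hlam
    have hlam0 : 0 ≤ lam := by
      rw [hlam]
      split
      · exact le_refl 0
      · exact div_nonneg (mul_nonneg hr0 hp'pos.le) hSeq0
    have hlam1 : lam ≤ 1 := by
      rw [hlam]
      split
      · norm_num
      · rw [div_le_one (lt_of_le_of_ne hSeq0 (Ne.symm ‹Seq ≠ 0›))]
        exact hrS
    set y : Fin n → ℝ := fun i =>
      if p' < v i then B i / p' else if v i = p' then lam * (B i / p') else 0 with hy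
    have hsumy : ∑ i, y i = Sgt / p' + lam * Seq / p' := by
      rw [← Finset.sum_filter_add_sum_filter_not Finset.univ (fun i => p' < v i) y]
      congr 1
      · rw [hSgt, Finset.sum_div]
        apply Finset.sum_congr rfl
        intro i hi
        have := (Finset.mem_filter.mp hi).2
        simp [hy, this]
      · have step : ∀ i ∈ Finset.univ.filter (fun i => ¬ p' < v i),
            y i = if v i = p' then lam * (B i / p') else 0 := by
          intro i hi
          have := (Finset.mem_filter.mp hi).2
          simp [hy, this]
        rw [Finset.sum_congr rfl step, ← Finset.sum_filter]
        have : (Finset.univ.filter (fun i => ¬ p' < v i)).filter (fun i => v i = p')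
            = Finset.univ.filter (fun i => v i = p') := by
          rw [Finset.filter_filter]
          apply Finset.filter_congr
          intro i _
          constructor
          · rintro ⟨_, h2⟩; exact h2
          · intro h1; exact ⟨not_lt.mpr h1.le, h1⟩
        rw [this, hSeq, Finset.mul_sum, Finset.sum_div]
        apply Finset.sum_congr rfl
        intro i _
        ring
    have hsumm : ∑ i, y i = (m : ℝ) := by
      rw [hsumy, hlam]
      by_cases hS : Seq = 0
      · rw [if_pos hS]
        have h1 : p' * m ≤ Sgt := by
          have := hK1; rw [hsplit, hS, add_zero] at this; exact this
        have h2 : Sgt = p' * m := le_antisymm hK2 h1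
        rw [hS, h2]
        field_simp
        ring
      · rw [if_neg hS]
        have : r * p' / Seq * Seq / p' = r := by
          field_simp
        rw [this, hr]
        ring
    refine ⟨p', y, hp'pos, ⟨?_, ?_, ?_, ?_⟩, ?_⟩
    · intro i hi; simp [hy, hi]
    · intro i hi
      have h1 : ¬ p' < v i := not_lt.mpr hi.le
      simp only [hy, if_neg h1, if_pos hi]
      have hBp : 0 ≤ B i / p' := div_nonneg (hB i).le hp'pos.le
      constructor
      · exact mul_nonneg hlam0 hBp
      · calc lam * (B i / p') ≤ 1 * (B i / p') :=
              mul_le_mul_of_nonneg_right hlam1 hBp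
          _ = B i / p' := one_mul _
    · intro i hi
      have h1 : ¬ p' < v i := not_lt.mpr hi.le
      have h2 : v i ≠ p' := ne_of_lt hi
      simp [hy, h1, h2]
    · rw [hsumm]
    · rw [hsumm]
      have hxR : (∑ i, (x i : ℝ)) ≤ (m : ℝ) := by
        have : ((∑ i, x i : ℕ) : ℝ) ≤ (m : ℝ) := by exact_mod_cast hxm
        rw [Nat.cast_sum] at this
        exact this
      calc p * (∑ i, (x i : ℝ)) ≤ p * m := by
            apply mul_le_mul_of_nonneg_left hxR hp.le
        _ ≤ p' * m := by apply mul_le_mul_of_nonneg_right hpp' hmR.le
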